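/- Fix h ≥ 3 an integer, let A ∈ GL(d,ℝ), and let Q(w) = Σ_{i=1}^d κ_i ((Aᵀw)_i)^h with all κ_i ≠ 0. Fix w₂ with (Aᵀw₂)_i ≠ 0 for all i. Then H := (∇²Q(w₂))^{-1} ∇²Q(w₁) = (Aᵀ)^{-1} diag(((Aᵀw₁)_i/(Aᵀw₂)_i)^{h-2}) Aᵀ for every w₁, so the columns of (A^{-1})ᵀ are eigenvectors of H with eigenvalues ((Aᵀw₁)_i/(Aᵀw₂)_i)^{h-2}. -/

import Mathlib

open Matrix

lemma hess_eq (d hn : ℕ) (A : Matrix (Fin d) (Fin d) ℝ) (κ : Fin d → ℝ) (w : Fin d → ℝ) :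
    (Matrix.of fun i j =>
        fderiv ℝ (fun x : Fin d → ℝ =>
            fderiv ℝ (fun y : Fin d → ℝ => ∑ k, κ k * (Aᵀ.mulVec y k) ^ hn)
              x (Pi.single j 1)) w (Pi.single i 1))
    = A * Matrix.diagonal (fun k => κ k * (hn : ℝ) * ((hn - 1 : ℕ) : ℝ) * (Aᵀ.mulVec w k) ^ (hn - 2)) * Aᵀ := by
  set c : Fin d → (Fin d → ℝ) →L[ℝ] ℝ :=
    fun k => LinearMap.toContinuousLinearMap ((LinearMap.proj k).comp Aᵀ.mulVecLin) with hc
  have hck : ∀ k (y : Fin d → ℝ), c k y = Aᵀ.mulVec y k := by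
    intro k y; simp [hc, Matrix.mulVecLin_apply, Matrix.mulVec_transpose]
  have hcsingle : ∀ k j, c k (Pi.single j 1) = Aᵀ k j := by
    intro k j; rw [hck, Matrix.mulVec_single]; simp
  -- first derivative
  have step1 : ∀ x : Fin d → ℝ, HasFDerivAt (fun y : Fin d → ℝ => ∑ k, κ k * (Aᵀ.mulVec y k) ^ hn)
      (∑ k, (κ k * (hn : ℝ) * (c k x) ^ (hn - 1)) • c k) x := by
    intro x
    apply HasFDerivAt.fun_sum
    intro k _
    have h1 : HasFDerivAt (fun y : Fin d → ℝ => (c k y) ^ hn)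
        (((hn : ℝ) * (c k x) ^ (hn - 1)) • c k) x :=
      (hasDerivAt_pow hn (c k x)).comp_hasFDerivAt x (c k).hasFDerivAt
    have h2 := h1.const_mul (κ k)
    have h3 : HasFDerivAt (fun y : Fin d → ℝ => κ k * (Aᵀ.mulVec y k) ^ hn)
        (κ k • ((hn : ℝ) * (c k x) ^ (hn - 1)) • c k) x := by
      simpa only [hck] using h2
    refine h3.congr_fderiv ?_
    rw [smul_smul]; ring_nf
  have step2 : ∀ (x : Fin d → ℝ) (j : Fin d),
      fderiv ℝ (fun y : Fin d → ℝ => ∑ k, κ k * (Aᵀ.mulVec y k) ^ hn) x (Pi.single j 1)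
        = ∑ k, κ k * (hn : ℝ) * (c k x) ^ (hn - 1) * Aᵀ k j := by
    intro x j
    rw [(step1 x).fderiv]
    simp [ContinuousLinearMap.sum_apply, hcsingle]
  -- second derivative
  have step3 : ∀ (j : Fin d) (i : Fin d),
      fderiv ℝ (fun x : Fin d → ℝ =>
          fderiv ℝ (fun y : Fin d → ℝ => ∑ k, κ k * (Aᵀ.mulVec y k) ^ hn) x (Pi.single j 1))
        w (Pi.single i 1)
      = ∑ k, κ k * (hn : ℝ) * ((hn - 1 : ℕ) : ℝ) * (Aᵀ.mulVec w k) ^ (hn - 2) * Aᵀ k j * Aᵀ k i := by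
    intro j i
    have heq : (fun x : Fin d → ℝ =>
        fderiv ℝ (fun y : Fin d → ℝ => ∑ k, κ k * (Aᵀ.mulVec y k) ^ hn) x (Pi.single j 1))
        = fun x => ∑ k, κ k * (hn : ℝ) * (c k x) ^ (hn - 1) * Aᵀ k j := by
      funext x; exact step2 x j
    rw [heq]
    have hder : HasFDerivAt (fun x : Fin d → ℝ => ∑ k, κ k * (hn : ℝ) * (c k x) ^ (hn - 1) * Aᵀ k j)
        (∑ k, (κ k * (hn : ℝ) * ((hn - 1 : ℕ) : ℝ) * (c k w) ^ (hn - 2) * Aᵀ k j) • c k) w := by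
      apply HasFDerivAt.fun_sum
      intro k _
      have h1 : HasFDerivAt (fun x : Fin d → ℝ => (c k x) ^ (hn - 1))
          ((((hn - 1 : ℕ) : ℝ) * (c k w) ^ (hn - 1 - 1)) • c k) w :=
        (hasDerivAt_pow (hn - 1) (c k w)).comp_hasFDerivAt w (c k).hasFDerivAt
      have h2 := (h1.const_mul (κ k * (hn : ℝ))).mul_const (Aᵀ k j)
      have h3 : (Aᵀ k j) • (κ k * (hn : ℝ)) • ((((hn - 1 : ℕ) : ℝ) * (c k w) ^ (hn - 1 - 1)) • c k)
          = (κ k * (hn : ℝ) * ((hn - 1 : ℕ) : ℝ) * (c k w) ^ (hn - 2) * Aᵀ k j) • c k := by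
        simp only [smul_smul]
        rw [show hn - 1 - 1 = hn - 2 by omega]
        congr 1; ring
      rw [h3] at h2
      exact h2
    rw [hder.fderiv]
    simp [ContinuousLinearMap.sum_apply, hcsingle, hck]
  ext i j
  rw [Matrix.of_apply, step3 j i]
  rw [Matrix.mul_apply]
  apply Finset.sum_congr rfl
  intro k _
  rw [Matrix.mul_diagonal]
  simp only [Matrix.transpose_apply]
  ring

/-- For `h ≥ 3`, `Q(w) = ∑ i, κ i * ((Aᵀw) i)^h` with all `κ i ≠ 0`, and
`w₂` with `(Aᵀw₂) i ≠ 0` for all `i`, the matrix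
`H = (∇²Q(w₂))⁻¹ ∇²Q(w₁)` equals `(Aᵀ)⁻¹ diag(((Aᵀw₁)_i/(Aᵀw₂)_i)^(h-2)) Aᵀ`,
so the columns of `(A⁻¹)ᵀ` are eigenvectors of `H` with those eigenvalues. -/
theorem general_h_eigen_identification (d : ℕ) (h : ℕ) (hh : 3 ≤ h)
    (A : Matrix (Fin d) (Fin d) ℝ) (hA : IsUnit A.det)
    (κ : Fin d → ℝ) (hκ : ∀ i, κ i ≠ 0)
    (w₂ : Fin d → ℝ) (hw₂ : ∀ i, Aᵀ.mulVec w₂ i ≠ 0) (w₁ : Fin d → ℝ) :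
    let Hess : (Fin d → ℝ) → Matrix (Fin d) (Fin d) ℝ := fun w =>
      Matrix.of fun i j =>
        fderiv ℝ (fun x : Fin d → ℝ =>
            fderiv ℝ (fun y : Fin d → ℝ => ∑ k, κ k * (Aᵀ.mulVec y k) ^ h)
              x (Pi.single j 1)) w (Pi.single i 1)
    let H : Matrix (Fin d) (Fin d) ℝ := (Hess w₂)⁻¹ * Hess w₁
    H = (Aᵀ)⁻¹
          * Matrix.diagonal (fun i => (Aᵀ.mulVec w₁ i / Aᵀ.mulVec w₂ i) ^ (h - 2)) * Aᵀ ∧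
    ∀ i : Fin d, H.mulVec (fun q => (A⁻¹)ᵀ q i)
        = ((Aᵀ.mulVec w₁ i / Aᵀ.mulVec w₂ i) ^ (h - 2)) • (fun q => (A⁻¹)ᵀ q i) := by
  intro Hess H
  have hAT : IsUnit Aᵀ.det := by rwa [Matrix.det_transpose]
  set v₂ : Fin d → ℝ := fun k => κ k * (h : ℝ) * ((h - 1 : ℕ) : ℝ) * (Aᵀ.mulVec w₂ k) ^ (h - 2) with hv₂
  set v₁ : Fin d → ℝ := fun k => κ k * (h : ℝ) * ((h - 1 : ℕ) : ℝ) * (Aᵀ.mulVec w₁ k) ^ (h - 2) with hv₁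
  have h1 : Hess w₁ = A * Matrix.diagonal v₁ * Aᵀ := hess_eq d h A κ w₁
  have h2 : Hess w₂ = A * Matrix.diagonal v₂ * Aᵀ := hess_eq d h A κ w₂
  have hne : ∀ k, v₂ k ≠ 0 := by
    intro k
    have hh0 : (h : ℝ) ≠ 0 := by positivity
    have hh1 : ((h - 1 : ℕ) : ℝ) ≠ 0 := by
      have : 1 ≤ h - 1 := by omega
      positivity
    exact mul_ne_zero (mul_ne_zero (mul_ne_zero (hκ k) hh0) hh1) (pow_ne_zero _ (hw₂ k))
  have hDinv : (Matrix.diagonal v₂)⁻¹ = Matrix.diagonal (fun k => (v₂ k)⁻¹) := by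
    apply Matrix.inv_eq_left_inv
    rw [Matrix.diagonal_mul_diagonal]
    have : (fun k => (v₂ k)⁻¹ * v₂ k) = fun _ => (1 : ℝ) := by
      funext k; exact inv_mul_cancel₀ (hne k)
    rw [this, Matrix.diagonal_one]
  have hratio : (fun k => (v₂ k)⁻¹ * v₁ k)
      = fun k => (Aᵀ.mulVec w₁ k / Aᵀ.mulVec w₂ k) ^ (h - 2) := by
    funext k
    have hh0 : (h : ℝ) ≠ 0 := by positivity
    have hh1 : ((h - 1 : ℕ) : ℝ) ≠ 0 := by
      have : 1 ≤ h - 1 := by omega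
      positivity
    have hb : (Aᵀ.mulVec w₂) k ^ (h - 2) ≠ 0 := pow_ne_zero _ (hw₂ k)
    rw [div_pow, inv_mul_eq_div, div_eq_div_iff (hne k) hb, hv₁, hv₂]
    ring
  have key : H = (Aᵀ)⁻¹
      * Matrix.diagonal (fun i => (Aᵀ.mulVec w₁ i / Aᵀ.mulVec w₂ i) ^ (h - 2)) * Aᵀ := by
    show (Hess w₂)⁻¹ * Hess w₁ = _
    rw [h1, h2, Matrix.mul_inv_rev, Matrix.mul_inv_rev, hDinv]
    have hAinv : A⁻¹ * A = 1 := Matrix.nonsing_inv_mul A hA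
    calc Aᵀ⁻¹ * (Matrix.diagonal (fun k => (v₂ k)⁻¹) * A⁻¹) * (A * Matrix.diagonal v₁ * Aᵀ)
        = Aᵀ⁻¹ * (Matrix.diagonal (fun k => (v₂ k)⁻¹) * ((A⁻¹ * A) * (Matrix.diagonal v₁ * Aᵀ))) := by
          simp only [Matrix.mul_assoc]
      _ = Aᵀ⁻¹ * (Matrix.diagonal (fun k => (v₂ k)⁻¹) * Matrix.diagonal v₁) * Aᵀ := by
          rw [hAinv, Matrix.one_mul]; simp only [Matrix.mul_assoc]
      _ = _ := by
          rw [Matrix.diagonal_mul_diagonal, hratio]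
  refine ⟨key, fun i => ?_⟩
  have hcol : H * (A⁻¹)ᵀ = (Aᵀ)⁻¹
      * Matrix.diagonal (fun i => (Aᵀ.mulVec w₁ i / Aᵀ.mulVec w₂ i) ^ (h - 2)) := by
    rw [key, Matrix.transpose_nonsing_inv, Matrix.mul_assoc,
      Matrix.mul_nonsing_inv _ hAT, Matrix.mul_one]
  funext q
  have hmv : H.mulVec (fun q => (A⁻¹)ᵀ q i) q = (H * (A⁻¹)ᵀ) q i := by
    rw [Matrix.mul_apply, Matrix.mulVec]
    simp [dotProduct]
  rw [hmv, hcol, Matrix.mul_diagonal, ← Matrix.transpose_nonsing_inv]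
  simp only [Matrix.transpose_apply, Pi.smul_apply, smul_eq_mul]
  ring
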